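/- Let A : H ⇉ H be an α-comonotone set-valued operator on a real Hilbert space H, where α ∈ ℝ, and let γ > 0 satisfy γ + α > 0. Then the resolvent J_{γA} := (Id + γA)^{-1} is at most single-valued, and on its domain it is conically θ-averaged with θ = γ/(2(γ + α)). -/

import Mathlib

open scoped InnerProductSpace Pointwise

/-- The resolvent `J_{γA} = (Id + γA)⁻¹` of an `α`-comonotone operator `A` with
`γ + α > 0` is at most single-valued and, on its domain, conically
`γ/(2(γ+α))`-averaged. -/
theorem resolvent_of_comonotone_conicallyAveraged {H : Type*} [NormedAddCommGroup H]
    [InnerProductSpace ℝ H] [CompleteSpace H] (A : H → Set H) (α γ : ℝ)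
    (hγ : 0 < γ) (hγα : 0 < γ + α)
    (hA : ∀ x u y v, u ∈ A x → v ∈ A y → ⟪x - y, u - v⟫_ℝ ≥ α * ‖u - v‖ ^ 2) :
    (∀ z x x', z - x ∈ γ • A x → z - x' ∈ γ • A x' → x = x') ∧
    (∃ R : H → H,
      (∀ z ∈ {w : H | ∃ x, w - x ∈ γ • A x}, ∀ z' ∈ {w : H | ∃ x, w - x ∈ γ • A x},
        ‖R z - R z'‖ ≤ ‖z - z'‖) ∧
      (∀ z x, z - x ∈ γ • A x →
        x = (1 - γ / (2 * (γ + α))) • z + (γ / (2 * (γ + α))) • R z)) := by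
  classical
  -- key inequality
  have key : ∀ z x z' x', z - x ∈ γ • A x → z' - x' ∈ γ • A x' →
      ⟪x - x', (z - x) - (z' - x')⟫_ℝ ≥ (α / γ) * ‖(z - x) - (z' - x')‖ ^ 2 := by
    intro z x z' x' hx hx'
    obtain ⟨u, hu, huv⟩ := hx
    obtain ⟨v, hv, hvv⟩ := hx'
    have h1 := hA x u x' v hu hv
    have hu' : u = γ⁻¹ • (z - x) := by rw [← huv, smul_smul, inv_mul_cancel₀ hγ.ne', one_smul]
    have hv' : v = γ⁻¹ • (z' - x') := by rw [← hvv, smul_smul, inv_mul_cancel₀ hγ.ne', one_smul]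
    rw [hu', hv', ← smul_sub] at h1
    rw [inner_smul_right, norm_smul] at h1
    have hn : ‖γ⁻¹‖ = γ⁻¹ := by
      rw [Real.norm_eq_abs, abs_of_pos (inv_pos.mpr hγ)]
    rw [hn] at h1
    have hγ0 : γ ≠ 0 := hγ.ne'
    have := mul_le_mul_of_nonneg_left h1 hγ.le
    calc (α / γ) * ‖(z - x) - (z' - x')‖ ^ 2
        = γ * (α * (γ⁻¹ * ‖(z - x) - (z' - x')‖) ^ 2) := by field_simp
      _ ≤ γ * (γ⁻¹ * ⟪x - x', (z - x) - (z' - x')⟫_ℝ) := this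
      _ = ⟪x - x', (z - x) - (z' - x')⟫_ℝ := by field_simp
  have single : ∀ z x x', z - x ∈ γ • A x → z - x' ∈ γ • A x' → x = x' := by
    intro z x x' hx hx'
    have h := key z x z x' hx hx'
    have he : (z - x) - (z - x') = -(x - x') := by abel
    rw [he, inner_neg_right, real_inner_self_eq_norm_sq, norm_neg] at h
    have h2 : (0:ℝ) < 1 + α / γ := by
      have : (γ + α) / γ > 0 := div_pos hγα hγ
      calc (0:ℝ) < (γ + α)/γ := this
        _ = 1 + α / γ := by field_simp
    have hsq0 : ‖x - x'‖ ^ 2 ≤ 0 := by nlinarith [sq_nonneg ‖x - x'‖]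
    have hx0 : ‖x - x'‖ = 0 := by
      have : ‖x - x'‖ ^ 2 = 0 := le_antisymm hsq0 (sq_nonneg _)
      exact pow_eq_zero_iff two_ne_zero |>.mp this
    exact norm_sub_eq_zero_iff.mp hx0
  refine ⟨single, ?_⟩
  set θ : ℝ := γ / (2 * (γ + α)) with hθ
  set lam : ℝ := 2 * (γ + α) / γ with hlam
  have hθlam : θ * lam = 1 := by
    rw [hθ, hlam]; field_simp
  set R : H → H := fun z => if h : ∃ x, z - x ∈ γ • A x then z + lam • (h.choose - z) else z
    with hR
  refine ⟨R, ?_, ?_⟩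
  · rintro z hz z' hz'
    have hz2 : ∃ x, z - x ∈ γ • A x := hz
    have hz2' : ∃ x, z' - x ∈ γ • A x := hz'
    have hzc := hz2.choose_spec
    have hzc' := hz2'.choose_spec
    set x := hz2.choose
    set x' := hz2'.choose
    have hRz : R z = z + lam • (x - z) := by simp only [hR]; rw [dif_pos hz2]
    have hRz' : R z' = z' + lam • (x' - z') := by simp only [hR]; rw [dif_pos hz2']
    have hk := key z x z' x' hzc hzc'
    set d := z - z' with hd
    set Q := (z - x) - (z' - x') with hQ
    have hdiff : R z - R z' = d - lam • Q := by
      rw [hRz, hRz', hd, hQ]; module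
    have hdQ : ⟪d, Q⟫_ℝ = ⟪x - x', Q⟫_ℝ + ‖Q‖ ^ 2 := by
      have : d = (x - x') + Q := by rw [hd, hQ]; abel
      rw [this, inner_add_left, real_inner_self_eq_norm_sq]
    have hsq : ‖R z - R z'‖ ^ 2 ≤ ‖d‖ ^ 2 := by
      rw [hdiff]
      rw [norm_sub_sq_real, inner_smul_right, norm_smul, Real.norm_eq_abs]
      have hlampos : 0 < lam := by
        rw [hlam]; positivity
      rw [abs_of_pos hlampos]
      have hlamQ : lam * ‖Q‖ ^ 2 ≤ 2 * ⟪d, Q⟫_ℝ := by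
        rw [hdQ]
        have : lam = 2 * (α / γ) + 2 := by rw [hlam]; field_simp; ring
        nlinarith [hk]
      nlinarith [sq_nonneg ‖Q‖]
    calc ‖R z - R z'‖ ≤ ‖d‖ := by
          nlinarith [norm_nonneg (R z - R z'), norm_nonneg d]
      _ = ‖z - z'‖ := rfl
  · intro z x hx
    have hz : ∃ x, z - x ∈ γ • A x := ⟨x, hx⟩
    have hxx : hz.choose = x := single z hz.choose x hz.choose_spec hx
    have hRz : R z = z + lam • (x - z) := by
      simp only [hR]; rw [dif_pos hz, hxx]
    rw [hRz]
    rw [smul_add, smul_smul, hθlam, one_smul]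
    have : (1 - θ) • z + (θ • z + (x - z)) = x := by module
    rw [this]
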